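/- The limit lim_{n→∞} (1/n) Σ_{k=1}^n sin({√k}) exists and equals 1 − cos(1). -/

import Mathlib

open Filter Topology

private noncomputable def F (k : ℕ) : ℝ := Real.sin (Int.fract (Real.sqrt k))

private lemma sin_lip (x y : ℝ) : |Real.sin x - Real.sin y| ≤ |x - y| := by
  rw [Real.sin_sub_sin]
  have h1 : |Real.sin ((x - y) / 2)| ≤ |(x - y) / 2| := Real.abs_sin_le_abs
  have h2 : |Real.cos ((x + y) / 2)| ≤ 1 := Real.abs_cos_le_one _
  have h3 : |(x - y) / 2| = |x - y| / 2 := by rw [abs_div]; norm_num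
  calc |2 * Real.sin ((x - y) / 2) * Real.cos ((x + y) / 2)|
      = 2 * |Real.sin ((x - y) / 2)| * |Real.cos ((x + y) / 2)| := by
        rw [abs_mul, abs_mul, abs_two]
    _ ≤ 2 * |(x - y) / 2| * 1 := by
        apply mul_le_mul (by linarith [abs_nonneg (Real.sin ((x-y)/2))]) h2
          (abs_nonneg _) (by positivity)
    _ = |x - y| := by rw [h3]; ring

private lemma cos_taylor {a b : ℝ} (hab : a ≤ b) :
    |Real.cos a - Real.cos b - (b - a) * Real.sin a| ≤ (b - a) ^ 2 := by
  set g : ℝ → ℝ := fun x => Real.cos a - Real.cos x - (x - a) * Real.sin a with hg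
  have hderiv : ∀ x ∈ Set.Icc a b,
      HasDerivWithinAt g (Real.sin x - Real.sin a) (Set.Icc a b) x := by
    intro x _
    have h1 : HasDerivAt (fun x : ℝ => Real.cos a - Real.cos x) (Real.sin x) x := by
      simpa using (Real.hasDerivAt_cos x).const_sub (Real.cos a)
    have h2 : HasDerivAt (fun x : ℝ => (x - a) * Real.sin a) (Real.sin a) x := by
      simpa using ((hasDerivAt_id x).sub_const a).mul_const (Real.sin a)
    exact (h1.sub h2).hasDerivWithinAt
  have hbound : ∀ x ∈ Set.Icc a b, ‖Real.sin x - Real.sin a‖ ≤ b - a := by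
    intro x hx
    have h1 := sin_lip x a
    have hxa : |x - a| ≤ b - a := by
      rw [abs_of_nonneg (by linarith [hx.1])]; linarith [hx.2]
    calc ‖Real.sin x - Real.sin a‖ = |Real.sin x - Real.sin a| := rfl
      _ ≤ |x - a| := h1
      _ ≤ b - a := hxa
  have key := (convex_Icc a b).norm_image_sub_le_of_norm_hasDerivWithin_le hderiv hbound
      (Set.left_mem_Icc.2 hab) (Set.right_mem_Icc.2 hab)
  have hga : g a = 0 := by simp [hg]
  have hgb : ‖g b - g a‖ = |Real.cos a - Real.cos b - (b - a) * Real.sin a| := by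
    rw [hga, sub_zero]; rfl
  rw [hgb] at key
  calc |Real.cos a - Real.cos b - (b - a) * Real.sin a| ≤ (b - a) * ‖b - a‖ := key
    _ = (b - a) ^ 2 := by
        rw [Real.norm_eq_abs, abs_of_nonneg (by linarith)]; ring

private lemma fract_sqrt (m j : ℕ) (hm : 1 ≤ m) (hj : j ≤ 2 * m) :
    Int.fract (Real.sqrt ((m : ℝ) ^ 2 + j)) = Real.sqrt ((m : ℝ) ^ 2 + j) - m := by
  have hm1 : (1 : ℝ) ≤ m := by exact_mod_cast hm
  have hx : (0 : ℝ) ≤ (m : ℝ) ^ 2 + j := by positivity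
  have h1 : (m : ℝ) ≤ Real.sqrt ((m : ℝ) ^ 2 + j) := by
    rw [Real.le_sqrt (by positivity) hx]
    have : (0:ℝ) ≤ j := Nat.cast_nonneg j
    linarith
  have h2 : Real.sqrt ((m : ℝ) ^ 2 + j) < m + 1 := by
    rw [Real.sqrt_lt' (by linarith)]
    have : (j : ℝ) ≤ 2 * m := by exact_mod_cast hj
    nlinarith
  have hfloor : ⌊Real.sqrt ((m : ℝ) ^ 2 + j)⌋ = (m : ℤ) := by
    rw [Int.floor_eq_iff]
    constructor
    · exact_mod_cast h1
    · push_cast; exact h2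
  rw [Int.fract, hfloor]
  norm_num

private lemma sqrt_approx (m j : ℕ) (hm : 1 ≤ m) (hj : j ≤ 2 * m) :
    |Real.sqrt ((m : ℝ) ^ 2 + j) - m - j / (2 * m)| ≤ 1 / (2 * m) := by
  have hm1 : (1 : ℝ) ≤ m := by exact_mod_cast hm
  have hmpos : (0 : ℝ) < m := by linarith
  have hjr : (j : ℝ) ≤ 2 * m := by exact_mod_cast hj
  have hj0 : (0 : ℝ) ≤ j := Nat.cast_nonneg j
  have hx : (0 : ℝ) ≤ (m : ℝ) ^ 2 + j := by positivity
  have hupper : Real.sqrt ((m : ℝ) ^ 2 + j) ≤ m + j / (2 * m) := by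
    rw [show (m : ℝ) + j / (2 * m) = Real.sqrt (((m : ℝ) + j / (2 * m)) ^ 2) from
      (Real.sqrt_sq (by positivity)).symm]
    apply Real.sqrt_le_sqrt
    have hsq : ((m : ℝ) + j / (2 * m)) ^ 2 = m ^ 2 + j + (j / (2 * m)) ^ 2 := by
      field_simp; ring
    rw [hsq]
    nlinarith [sq_nonneg ((j:ℝ) / (2 * m))]
  have hlower : m + j / (2 * m) - 1 / (2 * m) ≤ Real.sqrt ((m : ℝ) ^ 2 + j) := by
    have hnn : (0 : ℝ) ≤ m + j / (2 * m) - 1 / (2 * m) := by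
      have h1 : (1:ℝ) / (2 * m) ≤ 1 := by
        rw [div_le_one (by linarith)]; linarith
      have h2 : (0:ℝ) ≤ j / (2 * m) := by positivity
      linarith
    rw [Real.le_sqrt hnn hx]
    have key : ((m : ℝ) + j / (2 * m) - 1 / (2 * m)) ^ 2 =
        m ^ 2 + j + (((j : ℝ) - 1) ^ 2 - 4 * m ^ 2) / (4 * m ^ 2) := by
      field_simp; ring
    rw [key]
    have h2 : ((j : ℝ) - 1) ^ 2 ≤ 4 * m ^ 2 := by nlinarith
    have h4 : (((j : ℝ) - 1) ^ 2 - 4 * m ^ 2) / (4 * m ^ 2) ≤ 0 :=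
      div_nonpos_of_nonpos_of_nonneg (by linarith) (by positivity)
    linarith
  rw [abs_le]
  constructor <;> nlinarith [hupper, hlower]

private lemma block_bound (m : ℕ) (hm : 1 ≤ m) :
    |(∑ j ∈ Finset.range (2 * m + 1), F (m ^ 2 + j)) - 2 * m * (1 - Real.cos 1)| ≤ 3 := by
  have hm1 : (1 : ℝ) ≤ m := by exact_mod_cast hm
  have hm0 : (m : ℝ) ≠ 0 := by positivity
  have hmpos : (0 : ℝ) < 2 * m := by linarith
  obtain ⟨h, hh⟩ : ∃ h : ℝ, h = 1 / (2 * m) := ⟨_, rfl⟩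
  have hhpos : 0 < h := by rw [hh]; positivity
  have h2mh : 2 * (m:ℝ) * h = 1 := by rw [hh]; field_simp
  have hcast : ∀ j : ℕ, ((m ^ 2 + j : ℕ) : ℝ) = (m : ℝ) ^ 2 + j := by
    intro j; push_cast; ring
  have hterm : ∀ j ∈ Finset.range (2 * m),
      |F (m ^ 2 + j) - Real.sin ((j:ℝ) * h)| ≤ h := by
    intro j hj
    rw [Finset.mem_range] at hj
    have hj' : j ≤ 2 * m := hj.le
    show |Real.sin (Int.fract (Real.sqrt ((m ^ 2 + j : ℕ) : ℝ))) - Real.sin ((j:ℝ) * h)| ≤ h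
    rw [hcast j, fract_sqrt m j hm hj']
    refine (sin_lip _ _).trans ?_
    have happ := sqrt_approx m j hm hj'
    have hjh : (j : ℝ) * h = j / (2 * m) := by rw [hh]; ring
    rw [hjh, hh]
    exact happ
  have htel : ∀ j ∈ Finset.range (2 * m),
      |Real.sin ((j:ℝ) * h) - 2 * m * (Real.cos ((j:ℝ) * h) - Real.cos (((j:ℝ) + 1) * h))| ≤
        2 * m * h ^ 2 := by
    intro j _
    have hab : (j : ℝ) * h ≤ ((j:ℝ) + 1) * h := by nlinarith [hhpos, Nat.cast_nonneg (α := ℝ) j]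
    have hct := cos_taylor hab
    have hba : ((j : ℝ) + 1) * h - (j:ℝ) * h = h := by ring
    rw [hba] at hct
    have key : Real.sin ((j:ℝ) * h) - 2 * m * (Real.cos ((j:ℝ) * h) - Real.cos (((j:ℝ) + 1) * h))
        = -(2 * m) * (Real.cos ((j:ℝ)*h) - Real.cos (((j:ℝ)+1)*h) - h * Real.sin ((j:ℝ)*h)) +
          (1 - 2 * m * h) * Real.sin ((j:ℝ)*h) := by ring
    rw [key, h2mh]
    simp only [sub_self, zero_mul, add_zero]
    rw [abs_mul, abs_neg, abs_of_pos hmpos]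
    exact mul_le_mul_of_nonneg_left hct (le_of_lt hmpos)
  have htelsum : ∑ j ∈ Finset.range (2 * m),
      (Real.cos ((j:ℝ) * h) - Real.cos (((j:ℝ) + 1) * h)) = 1 - Real.cos 1 := by
    have hts := Finset.sum_range_sub' (fun j : ℕ => Real.cos ((j:ℝ) * h)) (2 * m)
    simp only [Nat.cast_zero, zero_mul, Real.cos_zero] at hts
    have h2mh' : ((2 * m : ℕ) : ℝ) * h = 1 := by push_cast; linarith [h2mh]
    rw [h2mh'] at hts
    rw [← hts]
    apply Finset.sum_congr rfl
    intro j _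
    push_cast
    ring_nf
  have hsum1 : |(∑ j ∈ Finset.range (2 * m), F (m ^ 2 + j)) -
      ∑ j ∈ Finset.range (2 * m), Real.sin ((j:ℝ) * h)| ≤ 1 := by
    rw [← Finset.sum_sub_distrib]
    refine (Finset.abs_sum_le_sum_abs _ _).trans ?_
    calc ∑ j ∈ Finset.range (2*m), |F (m ^ 2 + j) - Real.sin ((j:ℝ) * h)|
        ≤ ∑ _j ∈ Finset.range (2*m), h := Finset.sum_le_sum hterm
      _ = 2 * m * h := by
          rw [Finset.sum_const, Finset.card_range, nsmul_eq_mul]; push_cast; ring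
      _ = 1 := h2mh
  have hsum2 : |(∑ j ∈ Finset.range (2 * m), Real.sin ((j:ℝ) * h)) -
      2 * m * (1 - Real.cos 1)| ≤ 1 := by
    rw [← htelsum, Finset.mul_sum, ← Finset.sum_sub_distrib]
    refine (Finset.abs_sum_le_sum_abs _ _).trans ?_
    calc ∑ j ∈ Finset.range (2*m), |Real.sin ((j:ℝ)*h) -
          2 * m * (Real.cos ((j:ℝ)*h) - Real.cos (((j:ℝ)+1)*h))|
        ≤ ∑ _j ∈ Finset.range (2*m), 2 * m * h ^ 2 := Finset.sum_le_sum htel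
      _ = (2*m*h) * (2*m*h) * h / h := by
          rw [Finset.sum_const, Finset.card_range, nsmul_eq_mul]
          field_simp
          push_cast; ring
      _ = 1 := by rw [h2mh]; field_simp
  have hlast : |F (m ^ 2 + 2*m)| ≤ 1 := Real.abs_sin_le_one _
  rw [Finset.sum_range_succ]
  have expand : (∑ j ∈ Finset.range (2*m), F (m ^ 2 + j)) + F (m ^ 2 + 2*m) -
      2 * m * (1 - Real.cos 1)
      = ((∑ j ∈ Finset.range (2*m), F (m ^ 2 + j)) -
          ∑ j ∈ Finset.range (2*m), Real.sin ((j:ℝ)*h)) +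
        ((∑ j ∈ Finset.range (2*m), Real.sin ((j:ℝ)*h)) - 2*m*(1 - Real.cos 1)) +
        F (m ^ 2 + 2*m) := by ring
  rw [expand]
  have t1 := abs_add_le (((∑ j ∈ Finset.range (2*m), F (m ^ 2 + j)) -
          ∑ j ∈ Finset.range (2*m), Real.sin ((j:ℝ)*h)) +
        ((∑ j ∈ Finset.range (2*m), Real.sin ((j:ℝ)*h)) - 2*m*(1 - Real.cos 1)))
    (F (m ^ 2 + 2*m))
  have t2 := abs_add_le ((∑ j ∈ Finset.range (2*m), F (m ^ 2 + j)) -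
          ∑ j ∈ Finset.range (2*m), Real.sin ((j:ℝ)*h))
        ((∑ j ∈ Finset.range (2*m), Real.sin ((j:ℝ)*h)) - 2*m*(1 - Real.cos 1))
  linarith

private lemma sum_blocks (M : ℕ) :
    |(∑ k ∈ Finset.Ico 1 ((M + 1) ^ 2), F k) - ((M : ℝ) ^ 2 + M) * (1 - Real.cos 1)| ≤
      3 * (M : ℝ) := by
  induction M with
  | zero => simp
  | succ M ih =>
    have hsplit : (∑ k ∈ Finset.Ico 1 ((M + 1) ^ 2), F k) +
        (∑ k ∈ Finset.Ico ((M + 1) ^ 2) ((M + 2) ^ 2), F k) =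
        ∑ k ∈ Finset.Ico 1 ((M + 2) ^ 2), F k :=
      Finset.sum_Ico_consecutive _ (Nat.one_le_pow _ _ (Nat.succ_pos M))
        (Nat.pow_le_pow_left (by omega) 2)
    have hcard : (M + 2) ^ 2 - (M + 1) ^ 2 = 2 * (M + 1) + 1 := by
      have e : (M + 2) ^ 2 = (M + 1) ^ 2 + (2 * (M + 1) + 1) := by ring
      omega
    have hre : (∑ k ∈ Finset.Ico ((M + 1) ^ 2) ((M + 2) ^ 2), F k) =
        ∑ j ∈ Finset.range (2 * (M + 1) + 1), F ((M + 1) ^ 2 + j) := by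
      rw [Finset.sum_Ico_eq_sum_range, hcard]
    have hblock := block_bound (M + 1) (Nat.le_add_left 1 M)
    rw [← hre] at hblock
    have key : (∑ k ∈ Finset.Ico 1 ((M + 2) ^ 2), F k) -
        (((M + 1 : ℕ) : ℝ) ^ 2 + ((M + 1 : ℕ) : ℝ)) * (1 - Real.cos 1) =
        ((∑ k ∈ Finset.Ico 1 ((M + 1) ^ 2), F k) - ((M : ℝ) ^ 2 + M) * (1 - Real.cos 1)) +
        ((∑ k ∈ Finset.Ico ((M + 1) ^ 2) ((M + 2) ^ 2), F k) -
          2 * ((M + 1 : ℕ) : ℝ) * (1 - Real.cos 1)) := by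
      rw [← hsplit]; push_cast; ring
    show |(∑ k ∈ Finset.Ico 1 ((M + 2) ^ 2), F k) -
        (((M + 1 : ℕ) : ℝ) ^ 2 + ((M + 1 : ℕ) : ℝ)) * (1 - Real.cos 1)| ≤
        3 * ((M + 1 : ℕ) : ℝ)
    rw [key]
    have t1 := abs_add_le ((∑ k ∈ Finset.Ico 1 ((M + 1) ^ 2), F k) -
        ((M : ℝ) ^ 2 + M) * (1 - Real.cos 1))
      ((∑ k ∈ Finset.Ico ((M + 1) ^ 2) ((M + 2) ^ 2), F k) -
        2 * ((M + 1 : ℕ) : ℝ) * (1 - Real.cos 1))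
    have hc : ((M + 1 : ℕ) : ℝ) = (M : ℝ) + 1 := by push_cast; ring
    rw [hc] at t1 hblock ⊢
    linarith

private lemma main_bound (n : ℕ) (hn : 1 ≤ n) :
    |(∑ k ∈ Finset.Icc 1 n, F k) - (n : ℝ) * (1 - Real.cos 1)| ≤ 8 * (Nat.sqrt n : ℝ) := by
  set M := Nat.sqrt n with hM
  have hM1 : 1 ≤ M := by
    have := Nat.sqrt_le_sqrt hn
    simpa [hM] using this
  have hMle : M * M ≤ n := Nat.sqrt_le n
  have hltM : n < (M + 1) * (M + 1) := Nat.lt_succ_sqrt n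
  have hMle2 : M ^ 2 ≤ n := by rw [pow_two]; exact hMle
  have hltM2 : n < (M + 1) ^ 2 := by rw [pow_two]; exact hltM
  have hIcc : Finset.Icc 1 n = Finset.Ico 1 (n + 1) := by rw [Finset.Ico_add_one_right_eq_Icc]
  have hsplit : (∑ k ∈ Finset.Ico 1 (n + 1), F k) +
      (∑ k ∈ Finset.Ico (n + 1) ((M + 1) ^ 2), F k) =
      ∑ k ∈ Finset.Ico 1 ((M + 1) ^ 2), F k :=
    Finset.sum_Ico_consecutive _ (by omega) hltM2
  have htail : |∑ k ∈ Finset.Ico (n + 1) ((M + 1) ^ 2), F k| ≤ 2 * (M : ℝ) := by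
    refine (Finset.abs_sum_le_sum_abs _ _).trans ?_
    have hcard : ((M + 1) ^ 2 - (n + 1) : ℕ) ≤ 2 * M := by
      have e : (M + 1) ^ 2 = M * M + 2 * M + 1 := by ring
      omega
    calc ∑ k ∈ Finset.Ico (n + 1) ((M + 1) ^ 2), |F k|
        ≤ ∑ _k ∈ Finset.Ico (n + 1) ((M + 1) ^ 2), (1:ℝ) :=
          Finset.sum_le_sum fun k _ => Real.abs_sin_le_one _
      _ = (((M + 1) ^ 2 - (n + 1) : ℕ) : ℝ) := by
          rw [Finset.sum_const, Nat.card_Ico]; simp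
      _ ≤ 2 * (M : ℝ) := by exact_mod_cast hcard
  have hblocks := sum_blocks M
  have hcos1 : 0 < Real.cos 1 := Real.cos_one_pos
  have hcos2 : Real.cos 1 < 1 := lt_of_le_of_lt Real.cos_one_le (by norm_num)
  have hMn : |((M : ℝ) ^ 2 + M) - n| ≤ M := by
    have h1 : ((M : ℝ) ^ 2 : ℝ) ≤ n := by exact_mod_cast hMle2
    have h2 : (n : ℝ) ≤ (M : ℝ) ^ 2 + 2 * M := by
      have : n ≤ M ^ 2 + 2 * M := by
        have e : (M + 1) ^ 2 = M ^ 2 + 2 * M + 1 := by ring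
        omega
      exact_mod_cast this
    have hM1' : (1:ℝ) ≤ M := by exact_mod_cast hM1
    rw [abs_le]; constructor <;> nlinarith
  have key : (∑ k ∈ Finset.Icc 1 n, F k) - (n : ℝ) * (1 - Real.cos 1) =
      ((∑ k ∈ Finset.Ico 1 ((M + 1) ^ 2), F k) - ((M : ℝ) ^ 2 + M) * (1 - Real.cos 1)) -
      (∑ k ∈ Finset.Ico (n + 1) ((M + 1) ^ 2), F k) +
      (((M : ℝ) ^ 2 + M) - n) * (1 - Real.cos 1) := by
    rw [hIcc, ← hsplit]; ring
  rw [key]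
  have hM0 : (0:ℝ) ≤ (M : ℝ) := Nat.cast_nonneg M
  have h3 : |(((M : ℝ) ^ 2 + M) - n) * (1 - Real.cos 1)| ≤ (M : ℝ) := by
    rw [abs_mul]
    have hc : |1 - Real.cos 1| ≤ 1 := by rw [abs_of_nonneg (by linarith)]; linarith
    calc |((M : ℝ) ^ 2 + M) - n| * |1 - Real.cos 1| ≤ (M : ℝ) * 1 :=
        mul_le_mul hMn hc (abs_nonneg _) (Nat.cast_nonneg M)
      _ = (M : ℝ) := mul_one _
  have t1 := abs_add_le ((((∑ k ∈ Finset.Ico 1 ((M + 1) ^ 2), F k) -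
        ((M : ℝ) ^ 2 + M) * (1 - Real.cos 1))) -
      (∑ k ∈ Finset.Ico (n + 1) ((M + 1) ^ 2), F k))
    ((((M : ℝ) ^ 2 + M) - n) * (1 - Real.cos 1))
  have t2 : |(((∑ k ∈ Finset.Ico 1 ((M + 1) ^ 2), F k) -
        ((M : ℝ) ^ 2 + M) * (1 - Real.cos 1))) -
      (∑ k ∈ Finset.Ico (n + 1) ((M + 1) ^ 2), F k)| ≤
      |((∑ k ∈ Finset.Ico 1 ((M + 1) ^ 2), F k) -
        ((M : ℝ) ^ 2 + M) * (1 - Real.cos 1))| +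
      |∑ k ∈ Finset.Ico (n + 1) ((M + 1) ^ 2), F k| := abs_sub _ _
  linarith

/-- `lim_{n→∞} (1/n) Σ_{k=1}^n sin({√k}) = 1 − cos 1`. -/
theorem tendsto_average_sin_fract_sqrt :
    Tendsto
      (fun n : ℕ => (1 / (n : ℝ)) * ∑ k ∈ Finset.Icc 1 n, Real.sin (Int.fract (Real.sqrt k)))
      atTop (𝓝 (1 - Real.cos 1)) := by
  rw [← tendsto_sub_nhds_zero_iff]
  have hsqrt : Tendsto (fun n : ℕ => Real.sqrt n) atTop atTop := by
    rw [tendsto_atTop_atTop]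
    intro b
    refine ⟨⌈b⌉₊ ^ 2, fun n hn => ?_⟩
    calc b ≤ (⌈b⌉₊ : ℝ) := Nat.le_ceil b
      _ = Real.sqrt ((⌈b⌉₊ : ℝ) ^ 2) := (Real.sqrt_sq (Nat.cast_nonneg _)).symm
      _ ≤ Real.sqrt n := by
          apply Real.sqrt_le_sqrt
          exact_mod_cast (by exact_mod_cast hn : (⌈b⌉₊ ^ 2 : ℕ) ≤ n)
  have hlim : Tendsto (fun n : ℕ => 8 / Real.sqrt n) atTop (𝓝 0) :=
    tendsto_const_nhds.div_atTop hsqrt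
  apply squeeze_zero_norm' _ hlim
  filter_upwards [eventually_ge_atTop 1] with n hn
  have hnpos : (0 : ℝ) < n := by exact_mod_cast hn
  have hbound := main_bound n hn
  have hMsqrt : (Nat.sqrt n : ℝ) ≤ Real.sqrt n := Real.nat_sqrt_le_real_sqrt
  have hsq : Real.sqrt n * Real.sqrt n = n := Real.mul_self_sqrt (le_of_lt hnpos)
  have hs_pos : 0 < Real.sqrt n := Real.sqrt_pos.2 hnpos
  show ‖(1 / (n : ℝ)) * (∑ k ∈ Finset.Icc 1 n, F k) - (1 - Real.cos 1)‖ ≤ 8 / Real.sqrt n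
  have heq : (1 / (n : ℝ)) * (∑ k ∈ Finset.Icc 1 n, F k) - (1 - Real.cos 1) =
      (1 / (n : ℝ)) * ((∑ k ∈ Finset.Icc 1 n, F k) - (n : ℝ) * (1 - Real.cos 1)) := by
    field_simp
  rw [Real.norm_eq_abs, heq, abs_mul, abs_of_nonneg (by positivity : (0:ℝ) ≤ 1 / (n:ℝ))]
  have hfin : (1 / (n : ℝ)) * (8 * Real.sqrt n) = 8 / Real.sqrt n := by
    rw [← hsq]
    field_simp
    rw [Real.sqrt_sq hs_pos.le]
  calc (1 / (n : ℝ)) * |(∑ k ∈ Finset.Icc 1 n, F k) - (n : ℝ) * (1 - Real.cos 1)|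
      ≤ (1 / (n : ℝ)) * (8 * Real.sqrt n) := by
        apply mul_le_mul_of_nonneg_left _ (by positivity)
        exact hbound.trans (by linarith)
    _ = 8 / Real.sqrt n := hfin
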